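/- Let F be a free R-module of rank n with dual bases e_1,…,e_n of F and ε_1,…,ε_n of F*, let e_n-top = e_1 ∧ … ∧ e_n, and let X : F → F* be R-linear with matrix (x_{ij}) in these bases (X(e_j) = Σ_i x_{ij} ε_i). Then for all indices i, j: ( ε_j ∧ (⋀^{n−1} X)(ε_i ⌟ e_top) ) ⌟ e_top = (−1)^{n(n−1)/2} · (adjugate X)_{ij}, where e_top = e_1 ∧ … ∧ e_n. -/

import Mathlib

open ExteriorAlgebra

set_option synthInstance.maxHeartbeats 1000000
set_option maxHeartbeats 2000000

noncomputable def extMap (R : Type*) [CommRing R] {M N : Type*} [AddCommGroup M] [AddCommGroup N]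
    [Module R M] [Module R N] (f : M →ₗ[R] N) :
    ExteriorAlgebra R M →ₐ[R] ExteriorAlgebra R N :=
  ExteriorAlgebra.lift R ⟨(ExteriorAlgebra.ι R).comp f, fun m => by
    simp [ExteriorAlgebra.ι_sq_zero (f m)]⟩

noncomputable def extContract (R : Type*) [CommRing R] {M : Type*} [AddCommGroup M] [Module R M] :
    ExteriorAlgebra R (Module.Dual R M) →ₐ[R] Module.End R (ExteriorAlgebra R M) :=
  ExteriorAlgebra.lift R ⟨(CliffordAlgebra.contractLeft (Q := (0 : QuadraticForm R M)) :
      Module.Dual R M →ₗ[R] Module.End R (ExteriorAlgebra R M)), fun d => by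
    refine LinearMap.ext fun x => ?_
    rw [Module.End.mul_apply, LinearMap.zero_apply]
    exact CliffordAlgebra.contractLeft_contractLeft (Q := (0 : QuadraticForm R M)) (d := d) x⟩

noncomputable def extContractD (R : Type*) [CommRing R] {M : Type*} [AddCommGroup M] [Module R M] :
    ExteriorAlgebra R M →ₐ[R] Module.End R (ExteriorAlgebra R (Module.Dual R M)) :=
  ExteriorAlgebra.lift R ⟨(CliffordAlgebra.contractLeft
      (Q := (0 : QuadraticForm R (Module.Dual R M))) :
      Module.Dual R (Module.Dual R M) →ₗ[R] _).comp (Module.Dual.eval R M), fun m => by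
    refine LinearMap.ext fun x => ?_
    rw [Module.End.mul_apply, LinearMap.zero_apply, LinearMap.comp_apply]
    exact CliffordAlgebra.contractLeft_contractLeft
      (Q := (0 : QuadraticForm R (Module.Dual R M))) (d := Module.Dual.eval R M m) x⟩

def extDeg (R : Type*) [CommRing R] {M : Type*} [AddCommGroup M] [Module R M] (i : ℕ)
    (x : ExteriorAlgebra R M) : Prop :=
  x ∈ (LinearMap.range (ExteriorAlgebra.ι R : M →ₗ[R] ExteriorAlgebra R M)) ^ i

section Aux

variable {R M : Type*} [CommRing R] [AddCommGroup M] [Module R M]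

local notation "c" => CliffordAlgebra.contractLeft (Q := (0 : QuadraticForm R M))

lemma ιMulti_snoc (n : ℕ) (v : Fin (n+1) → M) :
    ιMulti R (n+1) v = ιMulti R n (v ∘ Fin.castSucc) * ExteriorAlgebra.ι R (v (Fin.last n)) := by
  rw [ιMulti_apply, ιMulti_apply, List.ofFn_succ', List.concat_eq_append, List.prod_append,
    List.prod_singleton]
  rfl

lemma contractLeft_ιMulti (f : Module.Dual R M) : ∀ (n : ℕ) (v : Fin (n+1) → M),
    c f (ιMulti R (n+1) v)
      = ∑ k : Fin (n+1), ((-1:R)^(k:ℕ) * f (v k)) • ιMulti R n (v ∘ k.succAbove) := by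
  intro n
  induction n with
  | zero =>
      intro v
      simp [CliffordAlgebra.contractLeft_ι, Algebra.algebraMap_eq_smul_one]
  | succ m ih =>
      intro v
      have tv : Matrix.vecTail v = fun k => v k.succ := rfl
      have key : ∀ k : Fin (m+1),
          ((-1:R)^((k.succ : Fin (m+2)) : ℕ) * f (v k.succ)) •
              ιMulti R (m+1) (v ∘ (k.succ).succAbove)
            = -(ExteriorAlgebra.ι R (v 0) *
                (((-1:R)^(k:ℕ) * f ((fun x => v x.succ) k)) •
                  ιMulti R m ((fun x => v x.succ) ∘ k.succAbove))) := by
        intro k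
        have h1 : ιMulti R (m+1) (v ∘ (k.succ).succAbove)
            = ExteriorAlgebra.ι R (v 0) * ιMulti R m ((fun x => v x.succ) ∘ k.succAbove) := by
          have hf : v ∘ (k.succ).succAbove
              = Fin.cons (v 0) ((fun x => v x.succ) ∘ k.succAbove) := by
            ext a
            refine Fin.cases ?_ (fun a' => ?_) a <;>
              simp [Fin.succ_succAbove_succ, Fin.succ_succAbove_zero, Function.comp_def]
          rw [hf, ιMulti_succ_apply]
          simp [Matrix.vecTail, Fin.tail_cons, Function.comp_def]
        rw [h1, mul_smul_comm, Fin.val_succ, pow_succ, ← neg_smul]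
        ring_nf
      rw [ιMulti_succ_apply, tv, CliffordAlgebra.contractLeft_ι_mul, Fin.sum_univ_succ]
      simp_rw [key]
      rw [Finset.sum_neg_distrib, ← Finset.mul_sum, ← ih]
      have h0 : (v ∘ (0 : Fin (m+2)).succAbove) = fun k => v k.succ := by
        ext a; simp
      rw [h0, Fin.val_zero, pow_zero, one_mul, sub_eq_add_neg]

lemma extContract_ι (d : Module.Dual R M) :
    extContract R (ExteriorAlgebra.ι R d) = c d := by
  simp only [extContract, ExteriorAlgebra.lift_ι_apply]

lemma tri_succ (n : ℕ) : (n+1)*(n+1-1)/2 = n*(n-1)/2 + n := by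
  have h1 : (n+1).choose 2 = n.choose 2 + n := by
    rw [Nat.choose_succ_succ]; simp [Nat.add_comm]
  rw [Nat.choose_two_right, Nat.choose_two_right] at h1
  simpa using h1

lemma extContract_ιMulti_ιMulti :
    ∀ (n : ℕ) (w : Fin n → Module.Dual R M) (v : Fin n → M),
    extContract R (ιMulti R n w) (ιMulti R n v)
      = algebraMap R (ExteriorAlgebra R M)
          ((-1:R)^(n*(n-1)/2) * Matrix.det (Matrix.of fun a b => w a (v b))) := by
  intro n
  induction n with
  | zero =>
      intro w v
      simp [Matrix.det_fin_zero]
  | succ n ih =>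
      intro w v
      rw [ιMulti_snoc, map_mul, Module.End.mul_apply, extContract_ι, contractLeft_ιMulti,
        map_sum]
      simp_rw [LinearMap.map_smul, ih]
      have hdet : Matrix.det (Matrix.of fun a b => w a (v b))
          = ∑ k : Fin (n+1), (-1:R)^(n + (k:ℕ)) * w (Fin.last n) (v k) *
              Matrix.det (Matrix.of fun a b =>
                (w ∘ Fin.castSucc) a ((v ∘ k.succAbove) b)) := by
        rw [Matrix.det_succ_row _ (Fin.last n)]
        refine Finset.sum_congr rfl fun k _ => ?_
        rw [Fin.val_last]
        congr 1
        congr 1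
        ext a b
        simp [Fin.succAbove_last]
      rw [hdet, tri_succ, Finset.mul_sum, map_sum]
      refine Finset.sum_congr rfl fun k _ => ?_
      rw [Algebra.smul_def, ← map_mul]
      congr 1
      rw [pow_add, pow_add]
      ring_nf
      rw [show ((-1:R))^(n*2) = 1 by rw [pow_mul', neg_one_sq, one_pow]]
      ring

section helpers
variable {R M N : Type*} [CommRing R] [AddCommGroup M] [AddCommGroup N] [Module R M] [Module R N]

lemma extMap_ι (f : M →ₗ[R] N) (y : M) :
    extMap R f (ExteriorAlgebra.ι R y) = ExteriorAlgebra.ι R (f y) := by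
  simp only [extMap, ExteriorAlgebra.lift_ι_apply, LinearMap.comp_apply]

lemma extMap_ιMulti (f : M →ₗ[R] N) (n : ℕ) (v : Fin n → M) :
    extMap R f (ιMulti R n v) = ιMulti R n (f ∘ v) := by
  rw [ιMulti_apply, ιMulti_apply, map_list_prod]
  congr 1
  simp [List.map_ofFn, Function.comp_def, extMap_ι]

lemma ιMulti_cons (n : ℕ) (a : M) (w : Fin n → M) :
    ιMulti R (n+1) (Fin.cons a w) = ExteriorAlgebra.ι R a * ιMulti R n w := by
  rw [ιMulti_succ_apply]
  simp [Matrix.vecTail, Function.comp_def]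

end helpers

end Aux

/-- Lemma 1.10: with dual bases `e` of `F` and `ε = e.dualBasis` of `F*`,
`e_top = e₁ ∧ ⋯ ∧ eₙ`, and `X : F → F*` with matrix `x` (so `X(e_j) = Σ_i x i j • ε i`),
one has `(ε_j ∧ (⋀^(n-1) X)(ε_i ⌟ e_top)) ⌟ e_top = (-1)^(n(n-1)/2) • (adjugate x) i j`. -/
theorem contraction_adjugate_entry (R : Type*) [CommRing R]
    (F : Type*) [AddCommGroup F] [Module R F]
    (n : ℕ) (hn : 2 ≤ n) (e : Module.Basis (Fin n) R F)
    (x : Matrix (Fin n) (Fin n) R) (X : F →ₗ[R] Module.Dual R F)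
    (hX : ∀ j, X (e j) = ∑ i, x i j • e.dualBasis i) (i j : Fin n) :
    extContract R
        (ExteriorAlgebra.ι R (e.dualBasis j) *
          extMap R X
            (extContract R (ExteriorAlgebra.ι R (e.dualBasis i))
              (ExteriorAlgebra.ιMulti R n (fun k => e k))))
        (ExteriorAlgebra.ιMulti R n (fun k => e k)) =
      algebraMap R (ExteriorAlgebra R F)
        ((-1 : R) ^ (n * (n - 1) / 2) * x.adjugate i j) := by
  obtain ⟨m, rfl⟩ : ∃ m, n = m + 1 := ⟨n - 1, by omega⟩
  -- Step 1: inner contraction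
  have h1 : extContract R (ExteriorAlgebra.ι R (e.dualBasis i))
        (ιMulti R (m+1) (fun k => e k))
      = ((-1:R)^(i:ℕ)) • ιMulti R m ((fun k => e k) ∘ i.succAbove) := by
    rw [extContract_ι, contractLeft_ιMulti]
    rw [Finset.sum_eq_single i]
    · simp [Module.Basis.dualBasis_apply_self]
    · intro k _ hk
      simp [Module.Basis.dualBasis_apply_self, Finsupp.single_apply, hk]
    · simp
  rw [h1, map_smul, extMap_ιMulti, mul_smul_comm, map_smul]
  have h2 : ExteriorAlgebra.ι R (e.dualBasis j) *
        ιMulti R m (X ∘ (fun k => e k) ∘ i.succAbove)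
      = ιMulti R (m+1) (Fin.cons (e.dualBasis j) (X ∘ (fun k => e k) ∘ i.succAbove)) :=
    (ιMulti_cons _ _ _).symm
  rw [h2, LinearMap.smul_apply, extContract_ιMulti_ιMulti]
  -- compute the determinant
  have hdet : Matrix.det (Matrix.of fun a b =>
        (Fin.cons (e.dualBasis j) (X ∘ (fun k => e k) ∘ i.succAbove) : Fin (m+1) → Module.Dual R F)
          a ((fun k => e k) b))
      = (-1:R)^(j:ℕ) * Matrix.det (x.submatrix j.succAbove i.succAbove) := by
    rw [Matrix.det_succ_row_zero]
    rw [Finset.sum_eq_single j]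
    · rw [show (Matrix.of fun a b =>
          (Fin.cons (e.dualBasis j) (X ∘ (fun k => e k) ∘ i.succAbove) : Fin (m+1) → Module.Dual R F)
            a ((fun k => e k) b)) 0 j = 1 by simp [Module.Basis.dualBasis_apply_self]]
      rw [mul_one]
      congr 1
      rw [← Matrix.det_transpose (x.submatrix j.succAbove i.succAbove)]
      congr 1
      ext a b
      simp only [Matrix.submatrix_apply, Matrix.of_apply, Matrix.transpose_apply, Fin.cons_succ,
        Function.comp_apply, hX]
      simp [Module.Basis.dualBasis_apply_self, Finsupp.single_apply]
    · intro k _ hk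
      rw [show (Matrix.of fun a b =>
          (Fin.cons (e.dualBasis j) (X ∘ (fun k => e k) ∘ i.succAbove) : Fin (m+1) → Module.Dual R F)
            a ((fun k => e k) b)) 0 k = 0 by simp [Module.Basis.dualBasis_apply_self, hk]]
      ring
    · simp
  rw [hdet, Matrix.adjugate_fin_succ_eq_det_submatrix, Algebra.smul_def, ← map_mul]
  congr 1
  rw [Nat.add_sub_cancel, pow_add]
  ring
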